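/- In a series system, if p_i ≥ p_j then the posterior intervals are nested (P[u = 0 | y_i = 1] ≤ P[u = 0 | y_j = 1] and P[u = 0 | y_i = 0] ≥ P[u = 0 | y_j = 0]) and consequently for every concave loss l* : [0,1] → ℝ one has VoI_G(i) ≥ VoI_G(j); in particular, the component with the highest marginal failure probability (the most vulnerable component) maximizes VoI_G, regardless of the interdependence among components' states and of the adopted concave loss function. -/

import Mathlib

open scoped Classical

/-- Probability of an event `E` under weights `w` on a finite outcome space. -/
noncomputable def Pr {Ω : Type*} [Fintype Ω] (w : Ω → ℝ) (E : Ω → Prop) : ℝ :=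
  ∑ ω ∈ Finset.univ.filter E, w ω

/-- Conditional probability `P[A | B]`. -/
noncomputable def cPr {Ω : Type*} [Fintype Ω] (w : Ω → ℝ) (A B : Ω → Prop) : ℝ :=
  Pr w (fun ω => A ω ∧ B ω) / Pr w B

/-- Posterior expected loss of inspecting a component with binary inspection outcome `y`
(`y = false` is an alarm), where `F` is the system-failure event and `l` the optimal
expected loss as a function of the system failure probability. -/
noncomputable def postLoss {Ω : Type*} [Fintype Ω] (w : Ω → ℝ) (F : Ω → Prop)
    (y : Ω → Bool) (l : ℝ → ℝ) : ℝ :=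
  Pr w (fun ω => y ω = false) * l (cPr w F (fun ω => y ω = false))
    + (1 - Pr w (fun ω => y ω = false)) * l (cPr w F (fun ω => y ω = true))

/-- Global value of information of inspecting a component with inspection outcome `y`. -/
noncomputable def VoIG {Ω : Type*} [Fintype Ω] (w : Ω → ℝ) (F : Ω → Prop)
    (y : Ω → Bool) (l : ℝ → ℝ) : ℝ :=
  l (Pr w F) - postLoss w F y l

section Aux

variable {Ω : Type*} [Fintype Ω] {w : Ω → ℝ}

lemma Pr_nonneg (hw0 : ∀ ω, 0 ≤ w ω) (E : Ω → Prop) : 0 ≤ Pr w E :=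
  Finset.sum_nonneg fun ω _ => hw0 ω

lemma Pr_congr {E E' : Ω → Prop} (h : ∀ ω, E ω ↔ E' ω) : Pr w E = Pr w E' := by
  unfold Pr; congr 1; ext ω; simp [h ω]

lemma Pr_false : Pr w (fun _ => False) = 0 := by simp [Pr]

lemma Pr_mono (hw0 : ∀ ω, 0 ≤ w ω) {E E' : Ω → Prop} (h : ∀ ω, E ω → E' ω) :
    Pr w E ≤ Pr w E' := by
  apply Finset.sum_le_sum_of_subset_of_nonneg
  · intro ω hω
    simp only [Finset.mem_filter] at *
    exact ⟨hω.1, h ω hω.2⟩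
  · intros; exact hw0 _

lemma Pr_univ (hw1 : ∑ ω, w ω = 1) : Pr w (fun _ => True) = 1 := by
  simpa [Pr] using hw1

lemma Pr_split (E D : Ω → Prop) :
    Pr w E = Pr w (fun ω => E ω ∧ D ω) + Pr w (fun ω => E ω ∧ ¬ D ω) := by
  simp only [Pr]
  rw [← Finset.sum_filter_add_sum_filter_not (Finset.univ.filter E) D w]
  congr 1 <;> · congr 1; ext ω; simp [and_comm]

lemma Pr_fiber {N : ℕ} (s : Ω → Fin N → Bool) (E : Ω → Prop) :
    ∑ σ : Fin N → Bool, Pr w (fun ω => E ω ∧ s ω = σ) = Pr w E := by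
  have h : ∀ σ, Pr w (fun ω => E ω ∧ s ω = σ)
      = ∑ ω ∈ Finset.univ.filter E, if s ω = σ then w ω else 0 := by
    intro σ
    rw [Pr, ← Finset.sum_filter]
    congr 1; ext ω; simp
  simp_rw [h]
  rw [Finset.sum_comm]
  unfold Pr
  congr 1
  ext ω
  simp

lemma Pr_comp_fiber {N : ℕ} (s : Ω → Fin N → Bool) (Q : (Fin N → Bool) → Prop)
    (σ : Fin N → Bool) (hw0 : ∀ ω, 0 ≤ w ω) :
    Pr w (fun ω => Q (s ω) ∧ s ω = σ) = if Q σ then Pr w (fun ω => s ω = σ) else 0 := by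
  by_cases hQ : Q σ
  · simp only [hQ, if_true]
    exact Pr_congr fun ω => ⟨fun h => h.2, fun h => ⟨h ▸ hQ, h⟩⟩
  · simp only [hQ, if_false]
    rw [show (0:ℝ) = Pr w (fun _ => False) from Pr_false.symm]
    exact Pr_congr fun ω => ⟨fun h => hQ (h.2 ▸ h.1), False.elim⟩

lemma Pr_comp {N : ℕ} (s : Ω → Fin N → Bool) (Q : (Fin N → Bool) → Prop)
    (hw0 : ∀ ω, 0 ≤ w ω) :
    Pr w (fun ω => Q (s ω)) = ∑ σ ∈ Finset.univ.filter Q, Pr w (fun ω => s ω = σ) := by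
  rw [← Pr_fiber s (fun ω => Q (s ω)), Finset.sum_filter]
  exact Finset.sum_congr rfl fun σ _ => Pr_comp_fiber s Q σ hw0

noncomputable def ind (p : Prop) : ℝ := if p then 1 else 0

lemma ind_of (p : Prop) (h : p) : ind p = 1 := if_pos h
lemma ind_not_of (p : Prop) (h : ¬ p) : ind p = 0 := if_neg h

lemma Pr_comp'' {N : ℕ} (s : Ω → Fin N → Bool) (Q : (Fin N → Bool) → Prop)
    (hw0 : ∀ ω, 0 ≤ w ω) :
    Pr w (fun ω => Q (s ω))
      = ∑ σ : Fin N → Bool, ind (Q σ) * Pr w (fun ω => s ω = σ) := by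
  rw [← Pr_fiber s (fun ω => Q (s ω))]
  refine Finset.sum_congr rfl fun σ _ => ?_
  rw [Pr_comp_fiber s Q σ hw0]
  by_cases hQ : Q σ
  · rw [if_pos hQ, ind_of _ hQ, one_mul]
  · rw [if_neg hQ, ind_not_of _ hQ, zero_mul]

lemma joint_fiber {N : ℕ} {s : Ω → Fin N → Bool} {yk : Ω → Bool} {εFA εFS : ℝ}
    (hw0 : ∀ ω, 0 ≤ w ω) (k : Fin N) (σ : Fin N → Bool)
    (hem : 0 < Pr w (fun ω => s ω = σ) →
      cPr w (fun ω => yk ω = false) (fun ω => s ω = σ) = if σ k = true then εFA else 1 - εFS) :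
    Pr w (fun ω => yk ω = false ∧ s ω = σ)
      = (if σ k = true then εFA else 1 - εFS) * Pr w (fun ω => s ω = σ) := by
  rcases lt_or_eq_of_le (Pr_nonneg hw0 (fun ω => s ω = σ)) with hpos | hzero
  · have := hem hpos
    rw [cPr] at this
    field_simp at this
    split_ifs at this ⊢ <;> linarith
  · have h1 : Pr w (fun ω => yk ω = false ∧ s ω = σ) ≤ Pr w (fun ω => s ω = σ) :=
      Pr_mono hw0 fun ω h => h.2
    have h2 : 0 ≤ Pr w (fun ω => yk ω = false ∧ s ω = σ) := Pr_nonneg hw0 _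
    rw [← hzero] at h1 ⊢
    have : Pr w (fun ω => yk ω = false ∧ s ω = σ) = 0 := le_antisymm h1 h2
    rw [this, mul_zero]

lemma joint_sum {N : ℕ} {s : Ω → Fin N → Bool} {yk : Ω → Bool} {εFA εFS : ℝ}
    (hw0 : ∀ ω, 0 ≤ w ω) (k : Fin N)
    (hem : ∀ σ, 0 < Pr w (fun ω => s ω = σ) →
      cPr w (fun ω => yk ω = false) (fun ω => s ω = σ) = if σ k = true then εFA else 1 - εFS)
    (Q : (Fin N → Bool) → Prop) :
    Pr w (fun ω => Q (s ω) ∧ yk ω = false)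
      = ∑ σ : Fin N → Bool,
          ind (Q σ) * ((if σ k = true then εFA else 1 - εFS) * Pr w (fun ω => s ω = σ)) := by
  rw [← Pr_fiber s (fun ω => Q (s ω) ∧ yk ω = false)]
  refine Finset.sum_congr rfl fun σ _ => ?_
  by_cases hQ : Q σ
  · rw [ind_of _ hQ, one_mul, ← joint_fiber hw0 k σ (hem σ)]
    exact Pr_congr fun ω => ⟨fun h => ⟨h.1.2, h.2⟩, fun h => ⟨⟨h.2 ▸ hQ, h.1⟩, h.2⟩⟩
  · rw [ind_not_of _ hQ, zero_mul,
      show (0:ℝ) = Pr w (fun _ => False) from Pr_false.symm]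
    exact Pr_congr fun ω => ⟨fun h => hQ (h.2 ▸ h.1.1), False.elim⟩

lemma hy_eq {N : ℕ} {s : Ω → Fin N → Bool} {yk : Ω → Bool} {εFA εFS : ℝ}
    (hw0 : ∀ ω, 0 ≤ w ω) (hw1 : ∑ ω, w ω = 1) (k : Fin N)
    (hem : ∀ σ, 0 < Pr w (fun ω => s ω = σ) →
      cPr w (fun ω => yk ω = false) (fun ω => s ω = σ) = if σ k = true then εFA else 1 - εFS) :
    Pr w (fun ω => yk ω = false)
      = εFA + (1 - εFA - εFS) * Pr w (fun ω => s ω k = false) := by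
  have h0 : Pr w (fun ω => yk ω = false)
      = Pr w (fun ω => (fun _ : Fin N → Bool => True) (s ω) ∧ yk ω = false) :=
    Pr_congr fun ω => by simp
  rw [h0, joint_sum hw0 k hem (fun _ => True)]
  have hterm : ∀ σ : Fin N → Bool,
      ind True * ((if σ k = true then εFA else 1 - εFS) * Pr w (fun ω => s ω = σ))
      = εFA * (ind True * Pr w (fun ω => s ω = σ))
        + (1 - εFA - εFS) * (ind (σ k = false) * Pr w (fun ω => s ω = σ)) := by
    intro σ
    rw [ind_of True trivial]
    cases hσ : σ k
    · rw [ind_of _ rfl, if_neg (by simp [hσ])]; ring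
    · rw [ind_not_of _ (by simp [hσ]), if_pos rfl]; ring
  have htot : ∑ σ : Fin N → Bool, Pr w (fun ω => s ω = σ) = 1 := by
    have h2 := Pr_comp'' s (fun _ => True) hw0
    rw [Pr_univ hw1] at h2
    calc ∑ σ : Fin N → Bool, Pr w (fun ω => s ω = σ)
        = ∑ σ : Fin N → Bool, ind True * Pr w (fun ω => s ω = σ) :=
          Finset.sum_congr rfl fun σ _ => by rw [ind_of True trivial, one_mul]
      _ = 1 := h2.symm
  rw [Finset.sum_congr rfl (fun σ _ => hterm σ), Finset.sum_add_distrib, ← Finset.mul_sum,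
    ← Finset.mul_sum, htot, ← Finset.mul_sum, ← Pr_comp'' s (fun σ => σ k = false) hw0,
    ind_of True trivial]
  ring

lemma gy_eq {N : ℕ} {s : Ω → Fin N → Bool} {yk : Ω → Bool} {εFA εFS : ℝ}
    (hw0 : ∀ ω, 0 ≤ w ω) (k : Fin N)
    (hem : ∀ σ, 0 < Pr w (fun ω => s ω = σ) →
      cPr w (fun ω => yk ω = false) (fun ω => s ω = σ) = if σ k = true then εFA else 1 - εFS) :
    Pr w (fun ω => (∃ m, s ω m = false) ∧ yk ω = false)
      = εFA * Pr w (fun ω => ∃ m, s ω m = false)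
        + (1 - εFA - εFS) * Pr w (fun ω => s ω k = false) := by
  have h0 : Pr w (fun ω => (∃ m, s ω m = false) ∧ yk ω = false)
      = Pr w (fun ω => (fun σ : Fin N → Bool => ∃ m, σ m = false) (s ω) ∧ yk ω = false) :=
    Pr_congr fun ω => by simp
  rw [h0, joint_sum hw0 k hem (fun σ => ∃ m, σ m = false)]
  have hterm : ∀ σ : Fin N → Bool,
      ind (∃ m, σ m = false) * ((if σ k = true then εFA else 1 - εFS) * Pr w (fun ω => s ω = σ))
      = εFA * (ind (∃ m, σ m = false) * Pr w (fun ω => s ω = σ))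
        + (1 - εFA - εFS) * (ind (σ k = false) * Pr w (fun ω => s ω = σ)) := by
    intro σ
    by_cases hQ : ∃ m, σ m = false
    · rw [ind_of _ hQ]
      cases hσ : σ k
      · rw [ind_of _ rfl, if_neg (by simp [hσ])]; ring
      · rw [ind_not_of _ (by simp [hσ]), if_pos rfl]; ring
    · have hσ : σ k = true := by
        cases hσ : σ k
        · exact absurd ⟨k, hσ⟩ hQ
        · rfl
      rw [ind_not_of _ hQ, ind_not_of _ (by simp [hσ])]; ring
  rw [Finset.sum_congr rfl (fun σ _ => hterm σ), Finset.sum_add_distrib, ← Finset.mul_sum,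
    ← Finset.mul_sum, ← Pr_comp'' s (fun σ => σ k = false) hw0,
    ← Pr_comp'' s (fun σ => ∃ m, σ m = false) hw0]

lemma mix_le {l : ℝ → ℝ} (hl : ConcaveOn ℝ (Set.Icc (0:ℝ) 1) l)
    {a b a' b' t t' p : ℝ}
    (ha0 : 0 ≤ a) (hb1 : b ≤ 1) (haa : a ≤ a') (hab : a' ≤ b') (hbb : b' ≤ b)
    (ht0 : 0 ≤ t) (ht1 : t ≤ 1) (ht'0 : 0 ≤ t') (ht'1 : t' ≤ 1)
    (hmix : t * b + (1 - t) * a = p) (hmix' : t' * b' + (1 - t') * a' = p) :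
    t * l b + (1 - t) * l a ≤ t' * l b' + (1 - t') * l a' := by
  have hamem : a ∈ Set.Icc (0:ℝ) 1 := ⟨ha0, by linarith⟩
  have hbmem : b ∈ Set.Icc (0:ℝ) 1 := ⟨by linarith, hb1⟩
  rcases eq_or_lt_of_le (show a ≤ b by linarith) with heq | hlt
  · have hb' : b' = a := by linarith
    have ha' : a' = a := by linarith
    have hb : b = a := heq.symm
    rw [hb', ha', hb]
    have h1 : t * l a + (1 - t) * l a = l a := by ring
    have h2 : t' * l a + (1 - t') * l a = l a := by ring
    linarith
  · have hba : b - a ≠ 0 := ne_of_gt (by linarith)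
    set lb := (b' - a) / (b - a) with hlb
    set la := (a' - a) / (b - a) with hla
    have hlb0 : 0 ≤ lb := div_nonneg (by linarith) (by linarith)
    have hlb1 : lb ≤ 1 := (div_le_one (by linarith)).2 (by linarith)
    have hla0 : 0 ≤ la := div_nonneg (by linarith) (by linarith)
    have hla1 : la ≤ 1 := (div_le_one (by linarith)).2 (by linarith)
    have hb'eq : lb * b + (1 - lb) * a = b' := by rw [hlb]; field_simp; ring
    have ha'eq : la * b + (1 - la) * a = a' := by rw [hla]; field_simp; ring
    have h1 : lb * l b + (1 - lb) * l a ≤ l b' := by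
      have := hl.2 hbmem hamem hlb0 (by linarith : (0:ℝ) ≤ 1 - lb) (by ring)
      simpa [smul_eq_mul, hb'eq] using this
    have h2 : la * l b + (1 - la) * l a ≤ l a' := by
      have := hl.2 hbmem hamem hla0 (by linarith : (0:ℝ) ≤ 1 - la) (by ring)
      simpa [smul_eq_mul, ha'eq] using this
    have hc' : t' * lb + (1 - t') * la = t := by
      have hmul : (t' * lb + (1 - t') * la) * (b - a) = t * (b - a) := by
        have f1 : (t' * lb + (1 - t') * la) * (b - a) = t' * (b' - a) + (1 - t') * (a' - a) := by
          rw [hlb, hla]; field_simp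
        have f2 : t' * (b' - a) + (1 - t') * (a' - a) = p - a := by nlinarith [hmix']
        have f3 : t * (b - a) = p - a := by nlinarith [hmix]
        linarith
      exact mul_right_cancel₀ hba hmul
    have e1 := mul_le_mul_of_nonneg_left h1 ht'0
    have e2 := mul_le_mul_of_nonneg_left h2 (by linarith : (0:ℝ) ≤ 1 - t')
    clear_value lb la
    have key : t * l b + (1 - t) * l a
        = t' * (lb * l b + (1 - lb) * l a) + (1 - t') * (la * l b + (1 - la) * l a) := by
      linear_combination (l a - l b) * hc'
    linarith

end Aux

set_option maxHeartbeats 1000000 in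
/-- In a series system (the system fails iff some component fails), with the
same inspection error rates for all components, if `p_i ≥ p_j` then the posterior intervals
are nested (`P[u=0 | y_i=1] ≤ P[u=0 | y_j=1]` and `P[u=0 | y_i=0] ≥ P[u=0 | y_j=0]`) and
consequently for every concave loss `l*` one has `VoI_G(i) ≥ VoI_G(j)`: the most vulnerable
component maximizes `VoI_G`, regardless of the interdependence among components' states and
of the adopted concave loss function. -/
theorem series_global_prefers_most_vulnerable {Ω : Type*} [Fintype Ω] {N : ℕ} (w : Ω → ℝ)
    (hw0 : ∀ ω, 0 ≤ w ω) (hw1 : ∑ ω, w ω = 1)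
    (s : Ω → Fin N → Bool) (y : Fin N → Ω → Bool)
    (εFA εFS : ℝ) (hFA0 : 0 ≤ εFA) (hFA : εFA < 1/2) (hFS0 : 0 ≤ εFS) (hFS : εFS < 1/2)
    (hemit : ∀ (k : Fin N) (σ : Fin N → Bool), 0 < Pr w (fun ω => s ω = σ) →
      cPr w (fun ω => y k ω = false) (fun ω => s ω = σ)
        = if σ k = true then εFA else 1 - εFS)
    (i j : Fin N)
    (hi0 : 0 < Pr w (fun ω => y i ω = false)) (hi1 : Pr w (fun ω => y i ω = false) < 1)
    (hj0 : 0 < Pr w (fun ω => y j ω = false)) (hj1 : Pr w (fun ω => y j ω = false) < 1)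
    (hpij : Pr w (fun ω => s ω j = false) ≤ Pr w (fun ω => s ω i = false)) :
    (cPr w (fun ω => ∃ k, s ω k = false) (fun ω => y i ω = true)
        ≤ cPr w (fun ω => ∃ k, s ω k = false) (fun ω => y j ω = true)
      ∧ cPr w (fun ω => ∃ k, s ω k = false) (fun ω => y j ω = false)
        ≤ cPr w (fun ω => ∃ k, s ω k = false) (fun ω => y i ω = false))
    ∧ ∀ l : ℝ → ℝ, ConcaveOn ℝ (Set.Icc (0:ℝ) 1) l →
        VoIG w (fun ω => ∃ k, s ω k = false) (y j) l
          ≤ VoIG w (fun ω => ∃ k, s ω k = false) (y i) l := by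
  -- raw distribution computations
  have hyi : Pr w (fun ω => y i ω = false)
      = εFA + (1 - εFA - εFS) * Pr w (fun ω => s ω i = false) := hy_eq hw0 hw1 i (hemit i)
  have hyj : Pr w (fun ω => y j ω = false)
      = εFA + (1 - εFA - εFS) * Pr w (fun ω => s ω j = false) := hy_eq hw0 hw1 j (hemit j)
  have hgi : Pr w (fun ω => (∃ m, s ω m = false) ∧ y i ω = false)
      = εFA * Pr w (fun ω => ∃ m, s ω m = false)
        + (1 - εFA - εFS) * Pr w (fun ω => s ω i = false) := gy_eq hw0 i (hemit i)
  have hgj : Pr w (fun ω => (∃ m, s ω m = false) ∧ y j ω = false)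
      = εFA * Pr w (fun ω => ∃ m, s ω m = false)
        + (1 - εFA - εFS) * Pr w (fun ω => s ω j = false) := gy_eq hw0 j (hemit j)
  have htrue : ∀ k : Fin N, Pr w (fun ω => y k ω = true)
      = 1 - Pr w (fun ω => y k ω = false) := by
    intro k
    have h1 : Pr w (fun _ : Ω => True)
        = Pr w (fun ω => True ∧ y k ω = false) + Pr w (fun ω => True ∧ ¬ (y k ω = false)) :=
      Pr_split _ _
    rw [Pr_univ hw1] at h1
    have h2 : Pr w (fun ω => True ∧ y k ω = false) = Pr w (fun ω => y k ω = false) :=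
      Pr_congr fun ω => by simp
    have h3 : Pr w (fun ω => True ∧ ¬ (y k ω = false)) = Pr w (fun ω => y k ω = true) :=
      Pr_congr fun ω => by simp
    rw [h2, h3] at h1
    linarith
  have hsplitF : ∀ k : Fin N, Pr w (fun ω => (∃ m, s ω m = false) ∧ y k ω = true)
      = Pr w (fun ω => ∃ m, s ω m = false)
        - Pr w (fun ω => (∃ m, s ω m = false) ∧ y k ω = false) := by
    intro k
    have h1 := Pr_split (w := w) (fun ω => ∃ m, s ω m = false) (fun ω => y k ω = false)
    have h3 : Pr w (fun ω => (∃ m, s ω m = false) ∧ ¬ (y k ω = false))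
        = Pr w (fun ω => (∃ m, s ω m = false) ∧ y k ω = true) :=
      Pr_congr fun ω => by simp
    rw [h3] at h1
    linarith
  -- basic bounds (raw)
  have hpi0 : 0 ≤ Pr w (fun ω => s ω i = false) := Pr_nonneg hw0 _
  have hpj0 : 0 ≤ Pr w (fun ω => s ω j = false) := Pr_nonneg hw0 _
  have hpiP : Pr w (fun ω => s ω i = false) ≤ Pr w (fun ω => ∃ k, s ω k = false) :=
    Pr_mono hw0 fun ω h => ⟨i, h⟩
  have hpjP : Pr w (fun ω => s ω j = false) ≤ Pr w (fun ω => ∃ k, s ω k = false) :=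
    Pr_mono hw0 fun ω h => ⟨j, h⟩
  -- posterior formulas (raw)
  have Ebi : cPr w (fun ω => ∃ k, s ω k = false) (fun ω => y i ω = false)
      = (εFA * Pr w (fun ω => ∃ k, s ω k = false)
          + (1 - εFA - εFS) * Pr w (fun ω => s ω i = false))
        / (εFA + (1 - εFA - εFS) * Pr w (fun ω => s ω i = false)) := by
    rw [cPr, hgi, hyi]
  have Ebj : cPr w (fun ω => ∃ k, s ω k = false) (fun ω => y j ω = false)
      = (εFA * Pr w (fun ω => ∃ k, s ω k = false)
          + (1 - εFA - εFS) * Pr w (fun ω => s ω j = false))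
        / (εFA + (1 - εFA - εFS) * Pr w (fun ω => s ω j = false)) := by
    rw [cPr, hgj, hyj]
  have Eai : cPr w (fun ω => ∃ k, s ω k = false) (fun ω => y i ω = true)
      = (Pr w (fun ω => ∃ k, s ω k = false)
          - (εFA * Pr w (fun ω => ∃ k, s ω k = false)
              + (1 - εFA - εFS) * Pr w (fun ω => s ω i = false)))
        / (1 - (εFA + (1 - εFA - εFS) * Pr w (fun ω => s ω i = false))) := by
    rw [cPr, hsplitF i, hgi, htrue i, hyi]
  have Eaj : cPr w (fun ω => ∃ k, s ω k = false) (fun ω => y j ω = true)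
      = (Pr w (fun ω => ∃ k, s ω k = false)
          - (εFA * Pr w (fun ω => ∃ k, s ω k = false)
              + (1 - εFA - εFS) * Pr w (fun ω => s ω j = false)))
        / (1 - (εFA + (1 - εFA - εFS) * Pr w (fun ω => s ω j = false))) := by
    rw [cPr, hsplitF j, hgj, htrue j, hyj]
  -- generalize to opaque real variables
  rw [hyi] at hi0 hi1
  rw [hyj] at hj0 hj1
  obtain ⟨P, hP⟩ : ∃ x, Pr w (fun ω => ∃ k, s ω k = false) = x := ⟨_, rfl⟩
  obtain ⟨pi, hpi⟩ : ∃ x, Pr w (fun ω => s ω i = false) = x := ⟨_, rfl⟩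
  obtain ⟨pj, hpj⟩ : ∃ x, Pr w (fun ω => s ω j = false) = x := ⟨_, rfl⟩
  obtain ⟨K, hKe⟩ : ∃ x, 1 - εFA - εFS = x := ⟨_, rfl⟩
  have hP0 : 0 ≤ P := by rw [← hP]; exact Pr_nonneg hw0 _
  have hP1 : P ≤ 1 := by
    rw [← hP, ← Pr_univ (w := w) hw1]
    exact Pr_mono hw0 fun ω _ => trivial
  rw [hP] at hpiP hpjP Ebi Ebj Eai Eaj
  rw [hpi] at hpi0 hpiP hpij Ebi Eai hi0 hi1 hyi
  rw [hpj] at hpj0 hpjP hpij Ebj Eaj hj0 hj1 hyj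
  rw [hKe] at Ebi Ebj Eai Eaj hi0 hi1 hj0 hj1 hyi hyj
  clear hemit hgi hgj htrue hsplitF hP hpi hpj hw1
  have hK : 0 < K := by rw [← hKe]; linarith
  have hi1' : 0 < 1 - (εFA + K * pi) := by linarith
  have hj1' : 0 < 1 - (εFA + K * pj) := by linarith
  -- nesting inequalities
  have hbji : (εFA * P + K * pj) / (εFA + K * pj) ≤ (εFA * P + K * pi) / (εFA + K * pi) := by
    rw [div_le_div_iff₀ hj0 hi0]
    nlinarith [mul_nonneg (mul_nonneg hFA0 hK.le)
      (mul_nonneg (sub_nonneg.2 hpij) (sub_nonneg.2 hP1))]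
  have haij : (P - (εFA * P + K * pi)) / (1 - (εFA + K * pi))
      ≤ (P - (εFA * P + K * pj)) / (1 - (εFA + K * pj)) := by
    rw [div_le_div_iff₀ hi1' hj1']
    nlinarith [mul_nonneg (mul_nonneg (by linarith : (0:ℝ) ≤ 1 - εFA) hK.le)
      (mul_nonneg (sub_nonneg.2 hpij) (sub_nonneg.2 hP1))]
  have hajP : (P - (εFA * P + K * pj)) / (1 - (εFA + K * pj)) ≤ P := by
    rw [div_le_iff₀ hj1']
    nlinarith [mul_nonneg (mul_nonneg hK.le hpj0) (sub_nonneg.2 hP1)]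
  have hPbj : P ≤ (εFA * P + K * pj) / (εFA + K * pj) := by
    rw [le_div_iff₀ hj0]
    nlinarith [mul_nonneg (mul_nonneg hK.le hpj0) (sub_nonneg.2 hP1)]
  have hFS' : 0 ≤ 1 - εFA - K := by rw [← hKe]; linarith
  have hai0 : 0 ≤ (P - (εFA * P + K * pi)) / (1 - (εFA + K * pi)) := by
    apply div_nonneg _ hi1'.le
    nlinarith [mul_nonneg hFS' hP0, mul_nonneg hK.le (sub_nonneg.2 hpiP)]
  have hbi1 : (εFA * P + K * pi) / (εFA + K * pi) ≤ 1 := by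
    rw [div_le_one hi0]
    nlinarith [mul_nonneg hK.le hpi0]
  -- mixtures
  have hmixi : (εFA + K * pi) * ((εFA * P + K * pi) / (εFA + K * pi))
      + (1 - (εFA + K * pi)) * ((P - (εFA * P + K * pi)) / (1 - (εFA + K * pi))) = P := by
    field_simp
    ring
  have hmixj : (εFA + K * pj) * ((εFA * P + K * pj) / (εFA + K * pj))
      + (1 - (εFA + K * pj)) * ((P - (εFA * P + K * pj)) / (1 - (εFA + K * pj))) = P := by
    field_simp
    ring
  refine ⟨⟨by rw [Eai, Eaj]; exact haij, by rw [Ebi, Ebj]; exact hbji⟩, ?_⟩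
  intro l hl
  simp only [VoIG, postLoss]
  apply sub_le_sub_left
  rw [hyi, hyj, Ebi, Ebj, Eai, Eaj]
  exact mix_le hl hai0 hbi1 haij (le_trans hajP hPbj) hbji
    (by linarith) (by linarith) (by linarith) (by linarith) hmixi hmixj
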